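/- In a directed acyclic graph with n vertices, the number of distinct superbubbles is at most n − 1. -/

import Mathlib

/-- `v` is reachable from `s` by a directed path whose internal vertices
(all vertices except the endpoints) avoid `avoid`. -/
def ReachWithout {V : Type*} (E : V → V → Prop) (avoid s v : V) : Prop :=
  s = v ∨ ∃ w, Relation.ReflTransGen (fun a b => E a b ∧ b ≠ avoid) s w ∧ E w v

/-- `t` is reachable from `v` by a directed path whose internal vertices avoid `avoid`. -/
def CoReachWithout {V : Type*} (E : V → V → Prop) (avoid v t : V) : Prop :=
  v = t ∨ ∃ w, E v w ∧ Relation.ReflTransGen (fun a b => E a b ∧ a ≠ avoid) w t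

/-- The subgraph induced by `U` is acyclic. -/
def AcyclicOn {V : Type*} (E : V → V → Prop) (U : Set V) : Prop :=
  ∀ v, ¬ Relation.TransGen (fun a b => E a b ∧ a ∈ U ∧ b ∈ U) v v

/-- The directed graph is acyclic. -/
def Acyclic {V : Type*} (E : V → V → Prop) : Prop :=
  ∀ v, ¬ Relation.TransGen E v v

/-- The reachability, matching and acyclicity conditions of a superbubble
(Definition 1, without minimality). -/
def SBCore {V : Type*} (E : V → V → Prop) (s t : V) : Prop :=
  s ≠ t ∧ Relation.TransGen E s t ∧
  (∀ v, ReachWithout E t s v ↔ CoReachWithout E s v t) ∧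
  AcyclicOn E {v | ReachWithout E t s v}

/-- `⟨s, t⟩` is a superbubble: reachability, matching, acyclicity and minimality. -/
def Superbubble {V : Type*} (E : V → V → Prop) (s t : V) : Prop :=
  SBCore E s t ∧ ∀ t', ReachWithout E t s t' → t' ≠ t → ¬ SBCore E s t'

section SBaux
variable {V : Type*} {E : V → V → Prop}

lemma sb_rtg_mono {r p : V → V → Prop} {a b : V} (h : Relation.ReflTransGen r a b)
    (f : ∀ a b, r a b → p a b) : Relation.ReflTransGen p a b :=
  Relation.ReflTransGen.mono f _ _ h

lemma sb_tg_mono {r p : V → V → Prop} {a b : V} (h : Relation.TransGen r a b)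
    (f : ∀ a b, r a b → p a b) : Relation.TransGen p a b :=
  Relation.TransGen.mono f _ _ h

lemma sb_rtg_avoid_target (hA : Acyclic E) {R : V → V → Prop} (hRE : ∀ a b, R a b → E a b)
    {s w v : V} (h : Relation.ReflTransGen R s w) (hv : Relation.TransGen E w v) :
    Relation.ReflTransGen (fun a b => R a b ∧ b ≠ v) s w := by
  induction h with
  | refl => exact .refl
  | tail hsx hxw ih =>
    rename_i x w'
    have hxv : Relation.TransGen E x v := (Relation.TransGen.head (hRE _ _ hxw) hv)
    exact (ih hxv).tail ⟨hxw, fun hh => hA v (hh ▸ hv)⟩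

lemma sb_rtg_avoid_source {c a x b : V} (h : Relation.ReflTransGen E x b)
    (hcx : Relation.TransGen E c x) (hca : ¬ Relation.TransGen E c a) :
    Relation.ReflTransGen (fun p q => E p q ∧ p ≠ a) x b := by
  induction h using Relation.ReflTransGen.head_induction_on with
  | refl => exact .refl
  | head hxy hyb ih =>
    exact Relation.ReflTransGen.head ⟨hxy, fun h => hca (h ▸ hcx)⟩ (ih (hcx.tail hxy))

lemma sb_rtg_target_to_source {c y x : V} {R : V → V → Prop}
    (h : Relation.ReflTransGen (fun a b => R a b ∧ b ≠ c) y x) (hy : y ≠ c) :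
    Relation.ReflTransGen (fun a b => R a b ∧ a ≠ c) y x := by
  induction h using Relation.ReflTransGen.head_induction_on with
  | refl => exact .refl
  | head hxy hyb ih => exact Relation.ReflTransGen.head ⟨hxy.1, hy⟩ (ih hxy.2)

lemma sb_rtg_target_ne {c s x : V} {R : V → V → Prop}
    (h : Relation.ReflTransGen (fun a b => R a b ∧ b ≠ c) s x) (hs : s ≠ c) : x ≠ c := by
  induction h with
  | refl => exact hs
  | tail _ h2 _ => exact h2.2

lemma sb_rtg_truncate {R : V → V → Prop} {c w t : V} (h : Relation.ReflTransGen R w t) :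
    Relation.ReflTransGen (fun a b => R a b ∧ a ≠ c) w t ∨
      Relation.ReflTransGen (fun a b => R a b ∧ a ≠ c) w c := by
  induction h using Relation.ReflTransGen.head_induction_on with
  | refl => exact .inl .refl
  | head hxy hyb ih =>
    rename_i x y
    by_cases hx : x = c
    · exact .inr (hx ▸ .refl)
    · rcases ih with h | h
      · exact .inl (Relation.ReflTransGen.head ⟨hxy, hx⟩ h)
      · exact .inr (Relation.ReflTransGen.head ⟨hxy, hx⟩ h)

lemma sb_exit_unique_aux (hA : Acyclic E) {s₁ s₂ t : V}
    (h1 : Superbubble E s₁ t) (h2 : Superbubble E s₂ t)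
    (hne : s₁ ≠ s₂) (h21 : ¬ Relation.TransGen E s₂ s₁) : False := by
  obtain ⟨⟨hs1t, hst1, hm1, _⟩, hmin1⟩ := h1
  obtain ⟨⟨hs2t, hst2, hm2, _⟩, _⟩ := h2
  -- s₂ is inside bubble 1
  have hU1s2 : ReachWithout E t s₁ s₂ := by
    obtain ⟨w, hw, hwt⟩ := Relation.TransGen.head'_iff.mp hst2
    exact (hm1 s₂).mpr (.inr ⟨w, hw, sb_rtg_avoid_source hwt (.single hw) h21⟩)
  have hts12 : Relation.TransGen E s₁ s₂ := by
    rcases hU1s2 with h | ⟨w, hp, e⟩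
    · exact absurd h hne
    · exact Relation.TransGen.tail' (sb_rtg_mono hp (fun a b h => h.1)) e
  -- the `key` contradiction: nothing reachable from s₁ avoiding s₂ can continue to t avoiding s₂
  have key : ∀ x y, Relation.ReflTransGen (fun a b => E a b ∧ b ≠ s₂) s₁ x → E x y → y ≠ s₂ →
      Relation.ReflTransGen (fun a b => E a b ∧ a ≠ s₂) y t → False := by
    intro x y hp exy hy hyt
    have co2 : CoReachWithout E s₂ s₁ t := by
      rcases hp.cases_head with h | ⟨z, ⟨ez, hz⟩, rest⟩
      · exact .inr ⟨y, h ▸ exy, hyt⟩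
      · have hx : x ≠ s₂ := sb_rtg_target_ne rest hz
        exact .inr ⟨z, ez, ((sb_rtg_target_to_source rest hz).tail ⟨exy, hx⟩).trans hyt⟩
    rcases (hm2 s₁).mpr co2 with h | ⟨w, hp', e⟩
    · exact hne h.symm
    · exact h21 (Relation.TransGen.tail' (sb_rtg_mono hp' (fun a b h => h.1)) e)
  -- paths from s₁ avoiding s₂ also avoid t
  have strengthen : ∀ x, Relation.ReflTransGen (fun a b => E a b ∧ b ≠ s₂) s₁ x →
      Relation.ReflTransGen (fun a b => E a b ∧ b ≠ t) s₁ x := by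
    intro x h
    induction h with
    | refl => exact .refl
    | tail hsx hxw ih =>
      refine ih.tail ⟨hxw.1, fun hh => ?_⟩
      subst hh
      exact key _ _ hsx hxw.1 (Ne.symm hs2t) .refl
  have core : SBCore E s₁ s₂ := by
    refine ⟨hne, hts12, fun v => ⟨?_, ?_⟩, fun v hv => hA v (sb_tg_mono hv (fun a b h => h.1))⟩
    · -- matching →
      rintro (rfl | ⟨x, hp, exv⟩)
      · -- v = s₁
        obtain ⟨w, hw, hws2⟩ := Relation.TransGen.head'_iff.mp hts12
        exact .inr ⟨w, hw, sb_rtg_avoid_source hws2 (.single hw) (hA s₁)⟩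
      · rename_i v
        by_cases hvs2 : v = s₂
        · exact .inl hvs2
        · have hU1v : ReachWithout E t s₁ v := .inr ⟨x, strengthen x hp, exv⟩
          rcases (hm1 v).mp hU1v with h | ⟨w, evw, hwt⟩
          · exact absurd (key x v hp exv hvs2 (h ▸ .refl)) not_false
          · rcases sb_rtg_truncate (c := s₂) hwt with h | h
            · exact absurd (key x v hp exv hvs2
                (Relation.ReflTransGen.head ⟨evw, hvs2⟩
                  (sb_rtg_mono h (fun a b hh => ⟨hh.1.1, hh.2⟩)))) not_false
            · exact .inr ⟨w, evw, sb_rtg_mono h (fun a b hh => hh.1)⟩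
    · -- matching ←
      rintro (rfl | ⟨w, evw, hws2⟩)
      · -- v = s₂
        rcases hU1s2 with h | ⟨w, hp, e⟩
        · exact absurd h hne
        · exact .inr ⟨w, sb_rtg_mono (sb_rtg_avoid_target hA (fun a b h => h.1) hp (.single e))
            (fun a b hh => ⟨hh.1.1, hh.2⟩), e⟩
      · rename_i v
        by_cases hvs1 : v = s₁
        · exact .inl hvs1.symm
        · have co1 : CoReachWithout E s₁ v t := by
            rcases (hm1 s₂).mp hU1s2 with h | ⟨w₂, esw₂, hw₂t⟩
            · exact absurd h hs2t
            · exact .inr ⟨w, evw, hws2.trans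
                (Relation.ReflTransGen.head ⟨esw₂, Ne.symm hne⟩ hw₂t)⟩
          rcases (hm1 v).mpr co1 with h | ⟨x, hp, exv⟩
          · exact absurd h.symm hvs1
          · have hxs2 : Relation.TransGen E x s₂ :=
              Relation.TransGen.head' exv
                (Relation.ReflTransGen.head evw (sb_rtg_mono hws2 (fun a b h => h.1)))
            exact .inr ⟨x, sb_rtg_mono (sb_rtg_avoid_target hA (fun a b h => h.1) hp hxs2)
              (fun a b hh => ⟨hh.1.1, hh.2⟩), exv⟩
  exact hmin1 s₂ hU1s2 hs2t core

lemma sb_exit_unique (hA : Acyclic E) {s₁ s₂ t : V}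
    (h1 : Superbubble E s₁ t) (h2 : Superbubble E s₂ t) : s₁ = s₂ := by
  by_contra hne
  by_cases h : Relation.TransGen E s₂ s₁
  · exact sb_exit_unique_aux hA h2 h1 (fun e => hne e.symm) (fun h' => hA s₁ (h'.trans h))
  · exact sb_exit_unique_aux hA h1 h2 hne h

end SBaux

/-- In a DAG with n ≥ 1 vertices there are at most n - 1 distinct superbubbles. -/
theorem superbubble_count_le {V : Type*} [Fintype V] (E : V → V → Prop)
    (hA : Acyclic E) (hn : 1 ≤ Fintype.card V) :
    {p : V × V | Superbubble E p.1 p.2}.ncard ≤ Fintype.card V - 1 := by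
  classical
  have hnV : Nonempty V := Fintype.card_pos_iff.mp hn
  haveI : IsTrans V (Relation.TransGen E) := ⟨fun a b c => Relation.TransGen.trans⟩
  haveI : IsIrrefl V (Relation.TransGen E) := ⟨hA⟩
  obtain ⟨m, -, hm⟩ := (Finite.wellFounded_of_trans_of_irrefl
    (Relation.TransGen E)).has_min Set.univ (Set.univ_nonempty)
  set S : Set (V × V) := {p : V × V | Superbubble E p.1 p.2}
  have hinj : Set.InjOn Prod.snd S := by
    intro p hp q hq hpq
    have := sb_exit_unique hA hp (show Superbubble E q.1 p.2 from hpq ▸ hq)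
    exact Prod.ext this hpq
  have himg : Prod.snd '' S ⊆ {m}ᶜ := by
    rintro t ⟨⟨s, t'⟩, hp, rfl⟩
    intro hmem
    rcases hmem with rfl
    obtain ⟨w, -, hw⟩ := Relation.TransGen.tail'_iff.mp hp.1.2.1
    exact hm w trivial (.single hw)
  calc S.ncard = (Prod.snd '' S).ncard := (Set.ncard_image_of_injOn hinj).symm
    _ ≤ ({m}ᶜ : Set V).ncard := Set.ncard_le_ncard himg (Set.toFinite _)
    _ = Fintype.card V - 1 := by
        rw [show ({m}ᶜ : Set V) = Set.univ \ {m} from (Set.compl_eq_univ_diff _),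
          Set.ncard_diff (Set.subset_univ _), Set.ncard_univ, Set.ncard_singleton,
          Nat.card_eq_fintype_card]
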